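/- For positive semidefinite n×n matrices A and B, ‖A^{1/2} − B^{1/2}‖₂² ≤ ‖A − B‖₁, where ‖·‖₂ is the Hilbert–Schmidt (Frobenius) norm and ‖·‖₁ is the trace norm. (Powers–Størmer inequality) -/

import Mathlib

open Matrix
open scoped ComplexOrder

/-- The positive semidefinite square root of a positive semidefinite matrix
(the definition removed from Mathlib, restored verbatim). -/
noncomputable def Matrix.PosSemidef.sqrt {m : Type*} [Fintype m] [DecidableEq m] {𝕜 : Type*}
    [RCLike 𝕜] {A : Matrix m m 𝕜} (hA : A.PosSemidef) : Matrix m m 𝕜 :=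
  hA.1.eigenvectorUnitary.1 * diagonal ((↑) ∘ (√·) ∘ hA.1.eigenvalues) *
    (star hA.1.eigenvectorUnitary : Matrix m m 𝕜)

/-- `f` applied to a matrix via the spectral decomposition (junk value `0` if
the matrix is not Hermitian). -/
noncomputable def matFun {n : ℕ} (f : ℝ → ℝ) (A : Matrix (Fin n) (Fin n) ℂ) :
    Matrix (Fin n) (Fin n) ℂ :=
  if hA : A.IsHermitian then
    (hA.eigenvectorUnitary : Matrix (Fin n) (Fin n) ℂ) *
      Matrix.diagonal (fun i => (f (hA.eigenvalues i) : ℂ)) *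
      (star hA.eigenvectorUnitary : Matrix (Fin n) (Fin n) ℂ)
  else 0

/-- The eigenvalues of a Hermitian matrix, sorted in non-increasing order
(junk value `0` if the matrix is not Hermitian). -/
noncomputable def eigsDesc {n : ℕ} (A : Matrix (Fin n) (Fin n) ℂ) : Fin n → ℝ :=
  if hA : A.IsHermitian then (fun k => hA.eigenvalues (Tuple.sort hA.eigenvalues (Fin.rev k)))
  else 0

/-- The absolute value `|X| = (XᴴX)^{1/2}` of a matrix. -/
noncomputable def matAbs {n : ℕ} (X : Matrix (Fin n) (Fin n) ℂ) : Matrix (Fin n) (Fin n) ℂ :=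
  (Matrix.posSemidef_conjTranspose_mul_self X).sqrt

/-- The singular values of `X`, sorted in non-increasing order. -/
noncomputable def svalsDesc {n : ℕ} (X : Matrix (Fin n) (Fin n) ℂ) : Fin n → ℝ :=
  eigsDesc (matAbs X)

/-- Sum of the first `k` entries of a vector indexed by `Fin n`. -/
noncomputable def kSum {n : ℕ} (μ : Fin n → ℝ) (k : ℕ) : ℝ :=
  ∑ j ∈ Finset.univ.filter (fun j : Fin n => (j : ℕ) < k), μ j

/-- The operator norm: the largest singular value. -/
noncomputable def opNorm {n : ℕ} (X : Matrix (Fin n) (Fin n) ℂ) : ℝ :=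
  ⨆ i, svalsDesc X i

section SqrtAux
open scoped MatrixOrder

lemma Matrix.PosSemidef.sqrt_eq_cfcSqrt {m : Type*} [Fintype m] [DecidableEq m] {𝕜 : Type*}
    [RCLike 𝕜] {A : Matrix m m 𝕜} (hA : A.PosSemidef) : hA.sqrt = CFC.sqrt A := by
  rw [CFC.sqrt_eq_cfc, cfc_nnreal_eq_real _ A, hA.1.cfc_eq]
  simp only [IsHermitian.cfc, Unitary.conjStarAlgAut_apply, Matrix.PosSemidef.sqrt]
  congr 3
  funext i
  simp [Real.coe_sqrt, Real.coe_toNNReal', max_eq_left (hA.eigenvalues_nonneg i)]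

lemma Matrix.PosSemidef.sqrt_mul_self {m : Type*} [Fintype m] [DecidableEq m] {𝕜 : Type*}
    [RCLike 𝕜] {A : Matrix m m 𝕜} (hA : A.PosSemidef) : hA.sqrt * hA.sqrt = A := by
  rw [hA.sqrt_eq_cfcSqrt]
  exact CFC.sqrt_mul_sqrt_self A hA.nonneg

lemma Matrix.PosSemidef.posSemidef_sqrt {m : Type*} [Fintype m] [DecidableEq m] {𝕜 : Type*}
    [RCLike 𝕜] {A : Matrix m m 𝕜} (hA : A.PosSemidef) : hA.sqrt.PosSemidef := by
  rw [hA.sqrt_eq_cfcSqrt]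
  exact (CFC.sqrt_nonneg A).posSemidef

lemma Matrix.PosSemidef.eq_sqrt_of_sq_eq {m : Type*} [Fintype m] [DecidableEq m] {𝕜 : Type*}
    [RCLike 𝕜] {A : Matrix m m 𝕜} (hA : A.PosSemidef) (B : Matrix m m 𝕜) {hB : B.PosSemidef}
    (h : A ^ 2 = B) : A = hB.sqrt := by
  rw [hB.sqrt_eq_cfcSqrt, eq_comm, CFC.sqrt_eq_iff B A hB.nonneg hA.nonneg, ← h, sq]

end SqrtAux

namespace PSaux

/-- positive part -/
def posf (x : ℝ) : ℝ := max x 0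
/-- negative part -/
def negf (x : ℝ) : ℝ := max (-x) 0
/-- sign-like function -/
noncomputable def sgnf (x : ℝ) : ℝ := if x < 0 then -1 else 1

lemma posf_nonneg (x : ℝ) : 0 ≤ posf x := le_max_right _ _
lemma negf_nonneg (x : ℝ) : 0 ≤ negf x := le_max_right _ _
lemma posf_add_negf (x : ℝ) : posf x + negf x = |x| :=
  max_zero_add_max_neg_zero_eq_abs_self x
lemma posf_sub_negf (x : ℝ) : posf x - negf x = x :=
  max_zero_sub_max_neg_zero_eq_self x
lemma sgnf_mul (x : ℝ) : sgnf x * x = |x| := by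
  unfold sgnf
  split
  · rw [abs_of_neg (by assumption)]; ring
  · rw [abs_of_nonneg (le_of_not_gt (by assumption))]; ring
lemma mul_sgnf (x : ℝ) : x * sgnf x = |x| := by rw [mul_comm]; exact sgnf_mul x
lemma one_sub_sgnf_nonneg (x : ℝ) : 0 ≤ 1 - sgnf x := by unfold sgnf; split <;> norm_num
lemma one_add_sgnf_nonneg (x : ℝ) : 0 ≤ 1 + sgnf x := by unfold sgnf; split <;> norm_num

variable {n : ℕ} {M : Matrix (Fin n) (Fin n) ℂ}

lemma matFun_eq (hM : M.IsHermitian) (f : ℝ → ℝ) :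
    matFun f M = (hM.eigenvectorUnitary : Matrix (Fin n) (Fin n) ℂ) *
      Matrix.diagonal (fun i => (f (hM.eigenvalues i) : ℂ)) *
      (star hM.eigenvectorUnitary : Matrix (Fin n) (Fin n) ℂ) := dif_pos hM

lemma star_mul_self (hM : M.IsHermitian) :
    (star hM.eigenvectorUnitary : Matrix (Fin n) (Fin n) ℂ) *
      (hM.eigenvectorUnitary : Matrix (Fin n) (Fin n) ℂ) = 1 := by
  exact Unitary.coe_star_mul_self _

lemma mul_star_self (hM : M.IsHermitian) :
    (hM.eigenvectorUnitary : Matrix (Fin n) (Fin n) ℂ) *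
      (star hM.eigenvectorUnitary : Matrix (Fin n) (Fin n) ℂ) = 1 := by
  exact Unitary.coe_mul_star_self _

lemma matFun_mul (hM : M.IsHermitian) (f g : ℝ → ℝ) :
    matFun f M * matFun g M = matFun (fun x => f x * g x) M := by
  rw [matFun_eq hM f, matFun_eq hM g, matFun_eq hM]
  set V := (hM.eigenvectorUnitary : Matrix (Fin n) (Fin n) ℂ) with hV
  set Vs := (star hM.eigenvectorUnitary : Matrix (Fin n) (Fin n) ℂ) with hVs
  have h1 : Vs * V = 1 := star_mul_self hM
  calc V * Matrix.diagonal (fun i => (f (hM.eigenvalues i) : ℂ)) * Vs *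
        (V * Matrix.diagonal (fun i => (g (hM.eigenvalues i) : ℂ)) * Vs)
      = V * (Matrix.diagonal (fun i => (f (hM.eigenvalues i) : ℂ)) * ((Vs * V) *
          (Matrix.diagonal (fun i => (g (hM.eigenvalues i) : ℂ)) * Vs))) := by
        simp only [Matrix.mul_assoc]
    _ = V * Matrix.diagonal (fun i => ((f (hM.eigenvalues i) * g (hM.eigenvalues i) : ℝ) : ℂ)) * Vs := by
        rw [h1, one_mul, ← Matrix.mul_assoc, ← Matrix.mul_assoc, Matrix.mul_assoc V,
          Matrix.diagonal_mul_diagonal]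
        congr 2
        funext i
        push_cast
        rfl

lemma matFun_add (hM : M.IsHermitian) (f g : ℝ → ℝ) :
    matFun f M + matFun g M = matFun (fun x => f x + g x) M := by
  simp only [matFun_eq hM]
  rw [← Matrix.add_mul, ← Matrix.mul_add, Matrix.diagonal_add]
  norm_num

lemma matFun_sub (hM : M.IsHermitian) (f g : ℝ → ℝ) :
    matFun f M - matFun g M = matFun (fun x => f x - g x) M := by
  simp only [matFun_eq hM]
  rw [← Matrix.sub_mul, ← Matrix.mul_sub, Matrix.diagonal_sub]
  norm_num

lemma matFun_congr {f g : ℝ → ℝ} (h : ∀ x, f x = g x) :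
    matFun f M = matFun g M := by
  have : f = g := funext h
  rw [this]

lemma matFun_id (hM : M.IsHermitian) : matFun (fun x => x) M = M := by
  rw [matFun_eq hM]
  exact hM.spectral_theorem.symm

lemma matFun_one (hM : M.IsHermitian) : matFun (fun _ => 1) M = 1 := by
  rw [matFun_eq hM]
  simp only [Complex.ofReal_one, Matrix.diagonal_one, Matrix.mul_one]
  exact mul_star_self hM

lemma matFun_psd (hM : M.IsHermitian) {f : ℝ → ℝ} (hf : ∀ x, 0 ≤ f x) :
    (matFun f M).PosSemidef := by
  rw [matFun_eq hM, Matrix.star_eq_conjTranspose]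
  exact (Matrix.PosSemidef.diagonal (fun i =>
    Complex.zero_le_real.mpr (hf (hM.eigenvalues i)))).mul_mul_conjTranspose_same _

lemma matFun_trace (hM : M.IsHermitian) (f : ℝ → ℝ) :
    (matFun f M).trace = ∑ i, (f (hM.eigenvalues i) : ℂ) := by
  rw [matFun_eq hM, Matrix.trace_mul_cycle, star_mul_self hM, one_mul, Matrix.trace_diagonal]

lemma trace_eq_sum_eigenvalues (hM : M.IsHermitian) :
    M.trace = ∑ i, (hM.eigenvalues i : ℂ) := by
  calc M.trace = (matFun (fun x => x) M).trace := by rw [matFun_id hM]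
    _ = _ := matFun_trace hM _

lemma matFun_mul_self (hM : M.IsHermitian) (f : ℝ → ℝ) :
    matFun f M * M = matFun (fun x => f x * x) M := by
  nth_rewrite 2 [← matFun_id hM]
  exact matFun_mul hM f _

lemma mul_matFun_self (hM : M.IsHermitian) (f : ℝ → ℝ) :
    M * matFun f M = matFun (fun x => x * f x) M := by
  nth_rewrite 1 [← matFun_id hM]
  exact matFun_mul hM _ f

lemma self_mul_self (hM : M.IsHermitian) :
    M * M = matFun (fun x => x * x) M := by
  nth_rewrite 1 [← matFun_id hM]
  exact matFun_mul_self hM _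

lemma trace_mul_psd_re_nonneg {P Q : Matrix (Fin n) (Fin n) ℂ}
    (hP : P.PosSemidef) (hQ : Q.PosSemidef) : 0 ≤ ((P * Q).trace).re := by
  have h2 : (P * Q).trace = (hP.sqrt * Q * hP.sqrt).trace := by
    conv_lhs => rw [← hP.sqrt_mul_self]
    rw [Matrix.mul_assoc, Matrix.trace_mul_comm]
  have h3 : (hP.sqrt * Q * hP.sqrt).PosSemidef := by
    have := hQ.conjTranspose_mul_mul_same hP.sqrt
    rwa [hP.posSemidef_sqrt.isHermitian.eq] at this
  have h4 : ∀ i, 0 ≤ ((hP.sqrt * Q * hP.sqrt) i i).re := by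
    intro i
    have h5 := h3.re_dotProduct_nonneg (Pi.single i 1)
    simpa [dotProduct, Matrix.mulVec_single, Pi.single_apply, apply_ite,
      Finset.sum_ite_eq'] using h5
  rw [h2, Matrix.trace]
  rw [Complex.re_sum]
  exact Finset.sum_nonneg fun i _ => h4 i

end PSaux

open PSaux

/-- Powers–Størmer: `‖A^{1/2} − B^{1/2}‖₂² ≤ ‖A − B‖₁` for PSD matrices. -/
theorem powers_stormer {n : ℕ} (A B : Matrix (Fin n) (Fin n) ℂ)
    (hA : A.PosSemidef) (hB : B.PosSemidef) :
    (((hA.sqrt - hB.sqrt)ᴴ * (hA.sqrt - hB.sqrt)).trace).re ≤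
      ∑ i, svalsDesc (A - B) i := by
  set X := hA.sqrt - hB.sqrt with hXdef
  set Y := hA.sqrt + hB.sqrt with hYdef
  set C := A - B with hCdef
  have hX : X.IsHermitian :=
    hA.posSemidef_sqrt.isHermitian.sub hB.posSemidef_sqrt.isHermitian
  have hC : C.IsHermitian := hA.isHermitian.sub hB.isHermitian
  set P := matFun posf X with hP
  set N := matFun negf X with hN
  set G := matFun (fun x => |x|) X with hG
  set U := matFun sgnf X with hU
  set Cp := matFun posf C with hCp
  set Cm := matFun negf C with hCm
  set Gc := matFun (fun x => |x|) C with hGc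
  -- basic algebra on sqrt's
  have hYmX : Y - X = hB.sqrt + hB.sqrt := by rw [hXdef, hYdef]; abel
  have hYpX : Y + X = hA.sqrt + hA.sqrt := by rw [hXdef, hYdef]; abel
  have hPSD_YmX : (Y - X).PosSemidef := by
    rw [hYmX]; exact hB.posSemidef_sqrt.add hB.posSemidef_sqrt
  have hPSD_YpX : (Y + X).PosSemidef := by
    rw [hYpX]; exact hA.posSemidef_sqrt.add hA.posSemidef_sqrt
  have h2C : X * Y + Y * X = C + C := by
    rw [hXdef, hYdef, hCdef]
    simp only [Matrix.sub_mul, Matrix.mul_sub, Matrix.add_mul, Matrix.mul_add,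
      hA.sqrt_mul_self, hB.sqrt_mul_self]
    abel
  -- matFun facts
  have hPpN : P + N = G := (matFun_add hX _ _).trans (matFun_congr posf_add_negf)
  have hXX : X * X = matFun (fun x => x * x) X := self_mul_self hX
  have hUX : U * X = G := (matFun_mul_self hX sgnf).trans (matFun_congr sgnf_mul)
  have hXU : X * U = G := (mul_matFun_self hX sgnf).trans (matFun_congr mul_sgnf)
  have hPX : P * X = matFun (fun x => posf x * x) X := matFun_mul_self hX posf
  have hNX : N * X = matFun (fun x => negf x * x) X := matFun_mul_self hX negf
  have h5 : matFun (fun x => posf x * x) X - matFun (fun x => negf x * x) X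
      = matFun (fun x => x * x) X :=
    (matFun_sub hX _ _).trans (matFun_congr fun x => by rw [← sub_mul, posf_sub_negf])
  -- step 1 : tr (X*X) ≤ tr (G*Y)
  have hid1 : P * (Y - X) + N * (Y + X) = G * Y - X * X := by
    have e : P * (Y - X) + N * (Y + X) = (P + N) * Y - (P * X - N * X) := by noncomm_ring
    rw [e, hPpN, hPX, hNX, h5, ← hXX]
  have key1 : ((X * X).trace).re ≤ ((G * Y).trace).re := by
    have e : G * Y = X * X + (P * (Y - X) + N * (Y + X)) := by rw [hid1]; abel
    have t1 : 0 ≤ ((P * (Y - X)).trace).re :=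
      trace_mul_psd_re_nonneg (matFun_psd hX posf_nonneg) hPSD_YmX
    have t2 : 0 ≤ ((N * (Y + X)).trace).re :=
      trace_mul_psd_re_nonneg (matFun_psd hX negf_nonneg) hPSD_YpX
    rw [e]
    simp only [Matrix.trace_add, Complex.add_re]
    linarith
  -- step 2 : tr (G*Y) = tr (U*C)
  have key2 : (G * Y).trace = (U * C).trace := by
    have e2 : U * (X * Y) + U * (Y * X) = U * C + U * C := by
      rw [← Matrix.mul_add, ← Matrix.mul_add, h2C]
    have t3 : (U * (X * Y)).trace = (G * Y).trace := by
      rw [← Matrix.mul_assoc, hUX]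
    have t4 : (U * (Y * X)).trace = (G * Y).trace := by
      rw [← Matrix.mul_assoc, Matrix.trace_mul_comm, ← Matrix.mul_assoc, hXU]
    have e3 := congrArg Matrix.trace e2
    rw [Matrix.trace_add, Matrix.trace_add, t3, t4, ← two_mul, ← two_mul] at e3
    exact mul_left_cancel₀ two_ne_zero e3
  -- step 3 : tr (U*C) ≤ tr Gc
  have hCpCm : Cp - Cm = C :=
    (matFun_sub hC _ _).trans ((matFun_congr posf_sub_negf).trans (matFun_id hC))
  have hCabs : Cp + Cm = Gc := (matFun_add hC _ _).trans (matFun_congr posf_add_negf)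
  have hU1 : (1 : Matrix (Fin n) (Fin n) ℂ) - U = matFun (fun x => 1 - sgnf x) X := by
    rw [← matFun_one hX]; exact matFun_sub hX _ _
  have hU2 : (1 : Matrix (Fin n) (Fin n) ℂ) + U = matFun (fun x => 1 + sgnf x) X := by
    rw [← matFun_one hX]; exact matFun_add hX _ _
  have hid3 : ((1 : Matrix (Fin n) (Fin n) ℂ) - U) * Cp
      + ((1 : Matrix (Fin n) (Fin n) ℂ) + U) * Cm = (Cp + Cm) - U * (Cp - Cm) := by
    noncomm_ring
  rw [hCabs, hCpCm] at hid3
  have key3 : ((U * C).trace).re ≤ (Gc.trace).re := by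
    have e : Gc = U * C + (((1 : Matrix (Fin n) (Fin n) ℂ) - U) * Cp
        + ((1 : Matrix (Fin n) (Fin n) ℂ) + U) * Cm) := by rw [hid3]; abel
    have t1 : 0 ≤ ((((1 : Matrix (Fin n) (Fin n) ℂ) - U) * Cp).trace).re := by
      rw [hU1]
      exact trace_mul_psd_re_nonneg (matFun_psd hX one_sub_sgnf_nonneg)
        (matFun_psd hC posf_nonneg)
    have t2 : 0 ≤ ((((1 : Matrix (Fin n) (Fin n) ℂ) + U) * Cm).trace).re := by
      rw [hU2]
      exact trace_mul_psd_re_nonneg (matFun_psd hX one_add_sgnf_nonneg)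
        (matFun_psd hC negf_nonneg)
    rw [e]
    simp only [Matrix.trace_add, Complex.add_re]
    linarith
  -- step 4 : tr Gc = ∑ svalsDesc C
  have hGcAbs : Gc = matAbs C := by
    have hpsd : Gc.PosSemidef := matFun_psd hC (fun x => abs_nonneg x)
    have hsq : Gc ^ 2 = Cᴴ * C := by
      rw [pow_two, hGc, matFun_mul hC, hC.eq, self_mul_self hC]
      exact matFun_congr fun x => by simp [abs_mul_abs_self]
    exact hpsd.eq_sqrt_of_sq_eq _ hsq
  have hsum : ∑ i, svalsDesc C i = ((matAbs C).trace).re := by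
    have hMac : (matAbs C).PosSemidef :=
      (Matrix.posSemidef_conjTranspose_mul_self C).posSemidef_sqrt
    have hherm := hMac.isHermitian
    unfold svalsDesc eigsDesc
    rw [dif_pos hherm, trace_eq_sum_eigenvalues hherm, Complex.re_sum]
    simp only [Complex.ofReal_re]
    rw [← Equiv.sum_comp (Tuple.sort hherm.eigenvalues) hherm.eigenvalues]
    exact Fintype.sum_bijective Fin.rev Fin.rev_bijective _ _ (fun k => rfl)
  -- assemble
  rw [hX.eq, hsum, ← hGcAbs]
  calc ((X * X).trace).re ≤ ((G * Y).trace).re := key1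
    _ = ((U * C).trace).re := by rw [key2]
    _ ≤ (Gc.trace).re := key3
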